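/- With γ_t = γ_{t-1}/(λ_t + α_t^{-2}γ_{t-1}), λ_t = 1 - ν^{t-1}(1-λ₁) for 0 < ν < 1, λ₁ ∈ (0,1), α_t^{-2} = λ₁⋯λ_t, and γ₀ > 0, one has γ_t → 0 and β_t := λ_t/(λ_t + α_t^{-2}γ_{t-1}) → 1 as t → ∞. -/

import Mathlib

open Filter Finset

theorem gamma_tendsto_zero_beta_tendsto_one (ν : ℝ) (hν0 : 0 < ν) (hν1 : ν < 1)
    (lam : ℕ → ℝ) (hl1 : lam 1 ∈ Set.Ioo (0 : ℝ) 1)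
    (hlam : ∀ t ≥ 1, lam t = 1 - ν ^ (t - 1) * (1 - lam 1))
    (α : ℕ → ℝ) (hα : ∀ t, α t = ∏ i ∈ Finset.Icc 1 t, lam i)
    (γ : ℕ → ℝ) (hγ0 : 0 < γ 0)
    (hrec : ∀ t ≥ 1, γ t = γ (t - 1) / (lam t + α t * γ (t - 1)))
    (β : ℕ → ℝ) (hβ : ∀ t ≥ 1, β t = lam t / (lam t + α t * γ (t - 1))) :
    Tendsto γ atTop (nhds 0) ∧ Tendsto β atTop (nhds 1) := by
  obtain ⟨hl0, hl1'⟩ := hl1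
  -- basic bounds on lam
  have hlam_bd : ∀ t ≥ 1, lam 1 ≤ lam t ∧ lam t < 1 := by
    intro t ht
    rw [hlam t ht]
    have hν1' : ν ^ (t - 1) ≤ 1 := pow_le_one₀ hν0.le hν1.le
    have hνpos : 0 < ν ^ (t - 1) := pow_pos hν0 _
    constructor
    · nlinarith
    · nlinarith
  have hlam_pos : ∀ t ≥ 1, 0 < lam t := fun t ht => lt_of_lt_of_le hl0 (hlam_bd t ht).1
  -- Bernoulli-type bound : lam 1 ^ (ν ^ (t-1)) ≤ lam t
  have key : ∀ t ≥ 1, lam 1 ^ ((ν : ℝ) ^ (t - 1) : ℝ) ≤ lam t := by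
    intro t ht
    set s : ℝ := ν ^ (t - 1) with hs
    have hs0 : 0 ≤ s := (pow_pos hν0 _).le
    have hs1 : s ≤ 1 := pow_le_one₀ hν0.le hν1.le
    have hconv := convexOn_exp.2 (Set.mem_univ (Real.log (lam 1))) (Set.mem_univ 0)
      hs0 (by linarith : (0:ℝ) ≤ 1 - s) (by ring)
    simp only [smul_eq_mul, mul_zero, add_zero, Real.exp_zero] at hconv
    rw [Real.exp_log hl0] at hconv
    have : lam 1 ^ s = Real.exp (s * Real.log (lam 1)) := by
      rw [Real.rpow_def_of_pos hl0, mul_comm]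
    rw [hlam t ht, this, ← hs]
    calc Real.exp (s * Real.log (lam 1)) ≤ s * lam 1 + (1 - s) * 1 := hconv
      _ = 1 - s * (1 - lam 1) := by ring
  -- α : positivity, ≤ 1, lower bound
  have hαpos : ∀ t, 0 < α t := by
    intro t
    rw [hα]
    exact Finset.prod_pos fun i hi => hlam_pos i (Finset.mem_Icc.mp hi).1
  have hαle1 : ∀ t, α t ≤ 1 := by
    intro t
    rw [hα]
    exact Finset.prod_le_one (fun i hi => (hlam_pos i (Finset.mem_Icc.mp hi).1).le)
      (fun i hi => (hlam_bd i (Finset.mem_Icc.mp hi).1).2.le)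
  set c : ℝ := lam 1 ^ ((1 - ν)⁻¹ : ℝ) with hc
  have hcpos : 0 < c := Real.rpow_pos_of_pos hl0 _
  have hαlb : ∀ t, c ≤ α t := by
    intro t
    have h1 : (∏ i ∈ Finset.Icc 1 t, lam 1 ^ ((ν : ℝ) ^ (i - 1) : ℝ)) ≤ α t := by
      rw [hα]
      exact Finset.prod_le_prod
        (fun i _ => (Real.rpow_pos_of_pos hl0 _).le)
        (fun i hi => key i (Finset.mem_Icc.mp hi).1)
    have h2 : (∏ i ∈ Finset.Icc 1 t, lam 1 ^ ((ν : ℝ) ^ (i - 1) : ℝ))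
        = lam 1 ^ (∑ i ∈ Finset.Icc 1 t, ((ν : ℝ) ^ (i - 1) : ℝ)) :=
      (Real.rpow_sum_of_pos hl0 _ _).symm
    have hsum : (∑ i ∈ Finset.Icc 1 t, ((ν : ℝ) ^ (i - 1) : ℝ)) ≤ (1 - ν)⁻¹ := by
      have heq : (∑ i ∈ Finset.Icc 1 t, ((ν : ℝ) ^ (i - 1) : ℝ))
          = ∑ j ∈ Finset.range t, ν ^ j := by
        clear h1 h2
        induction t with
        | zero => simp
        | succ n ih =>
          rw [Finset.sum_Icc_succ_top (Nat.le_add_left 1 n), ih, Finset.sum_range_succ]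
          simp
      rw [heq, Finset.range_eq_Ico]
      have := geom_sum_Ico_le_of_lt_one hν0.le hν1 (m := 0) (n := t)
      simpa [one_div] using this
    have h3 : lam 1 ^ ((1 - ν)⁻¹ : ℝ) ≤ lam 1 ^ (∑ i ∈ Finset.Icc 1 t, ((ν : ℝ) ^ (i - 1) : ℝ)) :=
      Real.rpow_le_rpow_of_exponent_ge hl0 hl1'.le hsum
    calc c ≤ _ := h3
      _ = _ := h2.symm
      _ ≤ α t := h1
  -- recurrence solution : (α t * γ t)⁻¹ = t + (γ 0)⁻¹ and γ t > 0
  have hα0 : α 0 = 1 := by rw [hα]; simp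
  have main : ∀ t, 0 < γ t ∧ (α t * γ t)⁻¹ = t + (γ 0)⁻¹ := by
    intro t
    induction t with
    | zero => simp [hα0, hγ0]
    | succ n ih =>
      obtain ⟨hγn, hγeq⟩ := ih
      have hsucc : n + 1 ≥ 1 := Nat.le_add_left 1 n
      have hαsucc : α (n + 1) = α n * lam (n + 1) := by
        rw [hα, hα, Finset.prod_Icc_succ_top (Nat.le_add_left 1 n)]
      have hlpos := hlam_pos (n + 1) hsucc
      have hden : 0 < lam (n + 1) + α (n + 1) * γ n := by
        have := mul_pos (hαpos (n + 1)) hγn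
        linarith
      have hγrec : γ (n + 1) = γ n / (lam (n + 1) + α (n + 1) * γ n) := by
        have := hrec (n + 1) hsucc
        simpa using this
      have hγpos : 0 < γ (n + 1) := by rw [hγrec]; positivity
      refine ⟨hγpos, ?_⟩
      have hαn := hαpos n
      have hαs := hαpos (n + 1)
      have hstep : (α (n + 1) * γ (n + 1))⁻¹ = (α n * γ n)⁻¹ + 1 := by
        rw [hγrec, hαsucc]
        field_simp
      rw [hstep, hγeq]
      push_cast
      ring
  have hγpos : ∀ t, 0 < γ t := fun t => (main t).1
  have hγformula : ∀ t, γ t = (α t * ((t : ℝ) + (γ 0)⁻¹))⁻¹ := by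
    intro t
    have h := (main t).2
    have h1 : α t * γ t = ((t : ℝ) + (γ 0)⁻¹)⁻¹ := by
      rw [← inv_inv (α t * γ t), h]
    have hne : α t ≠ 0 := (hαpos t).ne'
    field_simp at h1 ⊢
    nlinarith [hγpos t, hαpos t]
  -- γ → 0
  have hγ_tendsto : Tendsto γ atTop (nhds 0) := by
    have hub : ∀ t : ℕ, 1 ≤ t → γ t ≤ (c * t)⁻¹ := by
      intro t ht
      rw [hγformula t]
      have htpos : (0:ℝ) < t := by exact_mod_cast ht
      have h1 : c * t ≤ α t * ((t : ℝ) + (γ 0)⁻¹) := by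
        have := hαlb t
        have hα := hαpos t
        have : α t * (t : ℝ) ≤ α t * ((t : ℝ) + (γ 0)⁻¹) := by
          have : (0:ℝ) < (γ 0)⁻¹ := by positivity
          nlinarith
        nlinarith [hαlb t]
      exact inv_anti₀ (by positivity) h1
    have hg : Tendsto (fun t : ℕ => (c * t)⁻¹) atTop (nhds 0) := by
      have : Tendsto (fun t : ℕ => c * (t:ℝ)) atTop atTop :=
        (tendsto_natCast_atTop_atTop).const_mul_atTop hcpos
      exact this.inv_tendsto_atTop
    exact squeeze_zero' (Eventually.of_forall fun t => (hγpos t).le)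
      (eventually_atTop.mpr ⟨1, hub⟩) hg
  refine ⟨hγ_tendsto, ?_⟩
  -- lam → 1
  have hν_tendsto : Tendsto (fun t : ℕ => (ν : ℝ) ^ (t - 1)) atTop (nhds 0) :=
    (tendsto_pow_atTop_nhds_zero_of_lt_one hν0.le hν1).comp (tendsto_sub_atTop_nat 1)
  have hlam_tendsto : Tendsto lam atTop (nhds 1) := by
    have h1 : Tendsto (fun t : ℕ => 1 - ν ^ (t - 1) * (1 - lam 1)) atTop (nhds 1) := by
      have := (hν_tendsto.mul_const (1 - lam 1)).const_sub 1
      simpa using this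
    refine h1.congr' ?_
    filter_upwards [eventually_ge_atTop 1] with t ht
    exact (hlam t ht).symm
  -- α t * γ (t-1) → 0
  have hprod_tendsto : Tendsto (fun t : ℕ => α t * γ (t - 1)) atTop (nhds 0) := by
    have hγ' : Tendsto (fun t : ℕ => γ (t - 1)) atTop (nhds 0) :=
      hγ_tendsto.comp (tendsto_sub_atTop_nat 1)
    refine squeeze_zero' (Eventually.of_forall fun t => ?_)
      (Eventually.of_forall fun t => ?_) hγ'
    · exact (mul_pos (hαpos t) (hγpos (t - 1))).le
    · nlinarith [hαpos t, hαle1 t, hγpos (t - 1)]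
  -- β → 1
  have hden_tendsto : Tendsto (fun t : ℕ => lam t + α t * γ (t - 1)) atTop (nhds 1) := by
    have := hlam_tendsto.add hprod_tendsto
    simpa using this
  have h1 : Tendsto (fun t : ℕ => lam t / (lam t + α t * γ (t - 1))) atTop (nhds 1) := by
    have := hlam_tendsto.div hden_tendsto one_ne_zero
    rw [div_one] at this
    exact this
  refine h1.congr' ?_
  filter_upwards [eventually_ge_atTop 1] with t ht
  exact (hβ t ht).symm
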